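/- Let G = (V, E) be a finite simple graph with n vertices and maximum degree Δ, having at least one edge, and let k ≥ 2 be an integer with k ≤ n / (Δ + |λ_min(A_G)|). Then for every independent set S of G with |S| = k − 2, the random walk matrix of the graph H_S satisfies λ₂ ≤ 1/k. -/

import Mathlib

open Finset

variable {V : Type*} [Fintype V] [DecidableEq V]

/-- The independent sets of size `k` of a finite simple graph `G`. -/
def IndepSets (G : SimpleGraph V) [DecidableRel G.Adj] (k : ℕ) : Finset (Finset V) :=
  Finset.univ.filter (fun S => S.card = k ∧ ∀ u ∈ S, ∀ v ∈ S, ¬ G.Adj u v)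

/-- The transition probability of the `(k-1)`-th down-up walk on size-`k`
independent sets of `G`: from `S`, pick a uniformly random `v ∈ S`, then a
uniformly random independent set `T` of size `k` with `T ⊇ S \ {v}`. -/
noncomputable def duP (G : SimpleGraph V) [DecidableRel G.Adj] (k : ℕ)
    (S T : Finset V) : ℝ :=
  (1 / (k : ℝ)) * ∑ v ∈ S,
    if S.erase v ⊆ T then
      (1 : ℝ) / (((IndepSets G k).filter (fun T' => S.erase v ⊆ T')).card : ℝ)
    else 0

/-- The second largest eigenvalue of the down-up walk on size-`k` independent sets:
the walk is self-adjoint with respect to its stationary distribution, the uniform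
distribution on `IndepSets G k`, so by the variational principle `λ₂` is the
supremum of Rayleigh quotients of (nonzero) functions orthogonal to the constants. -/
noncomputable def duLam2 (G : SimpleGraph V) [DecidableRel G.Adj] (k : ℕ) : ℝ :=
  sSup { r : ℝ | ∃ f : Finset V → ℝ,
    (∑ S ∈ IndepSets G k, f S) = 0 ∧ (∑ S ∈ IndepSets G k, f S ^ 2) ≠ 0 ∧
    r = (∑ S ∈ IndepSets G k, f S * ∑ T ∈ IndepSets G k, duP G k S T * f T) /
        (∑ S ∈ IndepSets G k, f S ^ 2) }

/-- The smallest eigenvalue of a real symmetric matrix, via the variational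
principle: the infimum of its Rayleigh quotients. -/
noncomputable def lamMin (A : Matrix V V ℝ) : ℝ :=
  sInf { r : ℝ | ∃ f : V → ℝ, (∑ x, f x ^ 2) ≠ 0 ∧
    r = (∑ x, f x * ∑ y, A x y * f y) / (∑ x, f x ^ 2) }

/-- The closed neighbourhood `N[S]` of a set `S` of vertices: `S` together with all
vertices having a neighbour in `S`. -/
def closedNbhd (G : SimpleGraph V) [DecidableRel G.Adj] (S : Finset V) : Finset V :=
  S ∪ Finset.univ.filter (fun v => ∃ u ∈ S, G.Adj u v)

/-- The vertex set of `H_S`, the complement of the induced subgraph of `G` on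
`V ∖ N[S]`. -/
def hsVerts (G : SimpleGraph V) [DecidableRel G.Adj] (S : Finset V) : Finset V :=
  Finset.univ \ closedNbhd G S

/-- The neighbours of `v` in `H_S`: the vertices of `H_S` distinct from `v` and
non-adjacent to `v` in `G`. -/
def hsNbrs (G : SimpleGraph V) [DecidableRel G.Adj] (S : Finset V) (v : V) :
    Finset V :=
  (hsVerts G S).filter (fun u => u ≠ v ∧ ¬ G.Adj v u)

/-- The second largest eigenvalue of the random walk matrix `D⁻¹A` of the graph
`H_S`: the walk is self-adjoint with respect to the degree-proportional stationary
distribution, so by the variational principle `λ₂` is the supremum of Rayleigh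
quotients of (nonzero) functions orthogonal to the constants in the
degree-weighted inner product. -/
noncomputable def hsLam2 (G : SimpleGraph V) [DecidableRel G.Adj] (S : Finset V) :
    ℝ :=
  sSup { r : ℝ | ∃ f : V → ℝ,
    (∑ v ∈ hsVerts G S, ((hsNbrs G S v).card : ℝ) * f v) = 0 ∧
    (∑ v ∈ hsVerts G S, ((hsNbrs G S v).card : ℝ) * f v ^ 2) ≠ 0 ∧
    r = (∑ v ∈ hsVerts G S, f v * ∑ u ∈ hsNbrs G S v, f u) /
        (∑ v ∈ hsVerts G S, ((hsNbrs G S v).card : ℝ) * f v ^ 2) }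



section Helpers
set_option linter.unusedSectionVars false
set_option maxHeartbeats 1000000

lemma inner_adj (G : SimpleGraph V) [DecidableRel G.Adj] (g : V → ℝ) (x : V) :
    ∑ y, G.adjMatrix ℝ x y * g y = ∑ y ∈ G.neighborFinset x, g y := by
  rw [SimpleGraph.neighborFinset_eq_filter, Finset.sum_filter]
  refine Finset.sum_congr rfl fun y _ => ?_
  by_cases h : G.Adj x y <;> simp [h]

lemma nb_sum_comm (G : SimpleGraph V) [DecidableRel G.Adj] (F : V → V → ℝ) :
    ∑ x, ∑ y ∈ G.neighborFinset x, F x y = ∑ y, ∑ x ∈ G.neighborFinset y, F x y := by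
  simp only [SimpleGraph.neighborFinset_eq_filter, Finset.sum_filter]
  rw [Finset.sum_comm]
  exact Finset.sum_congr rfl fun y _ => Finset.sum_congr rfl fun x _ =>
    if_congr (G.adj_comm x y) rfl rfl

lemma rayleighN_ge (G : SimpleGraph V) [DecidableRel G.Adj] (g : V → ℝ) :
    -(G.maxDegree : ℝ) * ∑ x, g x ^ 2 ≤ ∑ x, g x * ∑ y, G.adjMatrix ℝ x y * g y := by
  have hN : ∑ x, g x * ∑ y, G.adjMatrix ℝ x y * g y
      = ∑ x, ∑ y ∈ G.neighborFinset x, g x * g y := by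
    refine Finset.sum_congr rfl fun x _ => ?_
    rw [inner_adj, Finset.mul_sum]
  have hsq : (0:ℝ) ≤ ∑ x, ∑ y ∈ G.neighborFinset x, (g x + g y)^2 :=
    Finset.sum_nonneg fun x _ => Finset.sum_nonneg fun y _ => sq_nonneg _
  have hexp : ∑ x, ∑ y ∈ G.neighborFinset x, (g x + g y)^2
      = (∑ x, ∑ y ∈ G.neighborFinset x, g x ^2)
        + 2 * (∑ x, ∑ y ∈ G.neighborFinset x, g x * g y)
        + ∑ x, ∑ y ∈ G.neighborFinset x, g y ^2 := by
    have hx : ∀ x : V, ∑ y ∈ G.neighborFinset x, (g x + g y)^2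
        = (∑ y ∈ G.neighborFinset x, g x ^ 2)
          + 2 * (∑ y ∈ G.neighborFinset x, g x * g y)
          + ∑ y ∈ G.neighborFinset x, g y ^ 2 := by
      intro x
      rw [Finset.mul_sum, ← Finset.sum_add_distrib, ← Finset.sum_add_distrib]
      exact Finset.sum_congr rfl fun y _ => by ring
    calc ∑ x, ∑ y ∈ G.neighborFinset x, (g x + g y)^2
        = ∑ x, ((∑ y ∈ G.neighborFinset x, g x ^ 2)
          + 2 * (∑ y ∈ G.neighborFinset x, g x * g y)
          + ∑ y ∈ G.neighborFinset x, g y ^ 2) := Finset.sum_congr rfl fun x _ => hx x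
      _ = _ := by rw [Finset.sum_add_distrib, Finset.sum_add_distrib, ← Finset.mul_sum]
  have hdeg : ∀ x : V, ((G.neighborFinset x).card : ℝ) ≤ (G.maxDegree : ℝ) := by
    intro x; exact_mod_cast G.degree_le_maxDegree x
  have h1 : ∑ x, ∑ y ∈ G.neighborFinset x, g x ^2 ≤ (G.maxDegree:ℝ) * ∑ x, g x ^2 := by
    rw [Finset.mul_sum]
    refine Finset.sum_le_sum fun x _ => ?_
    rw [Finset.sum_const, nsmul_eq_mul]
    exact mul_le_mul_of_nonneg_right (hdeg x) (sq_nonneg _)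
  have h2 : ∑ x, ∑ y ∈ G.neighborFinset x, g y ^2 ≤ (G.maxDegree:ℝ) * ∑ x, g x ^2 := by
    rw [nb_sum_comm G (fun x y => g y ^ 2), Finset.mul_sum]
    refine Finset.sum_le_sum fun x _ => ?_
    rw [Finset.sum_const, nsmul_eq_mul]
    exact mul_le_mul_of_nonneg_right (hdeg x) (sq_nonneg _)
  rw [hN]; nlinarith [hsq, hexp, h1, h2]

lemma lamMin_mem_ge (G : SimpleGraph V) [DecidableRel G.Adj] :
    ∀ r ∈ { r : ℝ | ∃ f : V → ℝ, (∑ x, f x ^ 2) ≠ 0 ∧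
      r = (∑ x, f x * ∑ y, G.adjMatrix ℝ x y * f y) / (∑ x, f x ^ 2) },
      -(G.maxDegree : ℝ) ≤ r := by
  rintro r ⟨f, hF, rfl⟩
  have hF0 : 0 < ∑ x, f x ^ 2 :=
    (Finset.sum_nonneg fun x _ => sq_nonneg (f x)).lt_of_ne (Ne.symm hF)
  rw [le_div_iff₀ hF0]
  exact rayleighN_ge G f

lemma lamMin_neg_one_mem (G : SimpleGraph V) [DecidableRel G.Adj]
    {u v : V} (huv : G.Adj u v) :
    (-1:ℝ) ∈ { r : ℝ | ∃ f : V → ℝ, (∑ x, f x ^ 2) ≠ 0 ∧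
      r = (∑ x, f x * ∑ y, G.adjMatrix ℝ x y * f y) / (∑ x, f x ^ 2) } := by
  have hne : u ≠ v := G.ne_of_adj huv
  set f : V → ℝ := fun x => if x = u then 1 else if x = v then -1 else 0 with hf
  have hvu : v ≠ u := Ne.symm hne
  have key : ∀ h : V → ℝ, ∑ x, f x * h x = h u - h v := by
    intro h
    have hpt : ∀ x, f x * h x = (if x = u then h u else 0) + (if x = v then -h v else 0) := by
      intro x
      by_cases h1 : x = u
      · simp [hf, h1, hne]
      · by_cases h2 : x = v
        · simp [hf, h1, h2, hvu]
        · simp [hf, h1, h2]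
    rw [Finset.sum_congr rfl fun x _ => hpt x, Finset.sum_add_distrib,
      Finset.sum_ite_eq' univ u (fun _ => h u), Finset.sum_ite_eq' univ v (fun _ => -h v)]
    simp; ring
  have sumnb : ∀ s : Finset V, ∑ y ∈ s, f y
      = (if u ∈ s then (1:ℝ) else 0) + (if v ∈ s then (-1:ℝ) else 0) := by
    intro s
    have hpt : ∀ y, f y = (if y = u then (1:ℝ) else 0) + (if y = v then (-1:ℝ) else 0) := by
      intro y
      by_cases h1 : y = u
      · simp [hf, h1, hne]
      · by_cases h2 : y = v <;> simp [hf, h1, h2, hvu]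
    rw [Finset.sum_congr rfl fun y _ => hpt y, Finset.sum_add_distrib,
      Finset.sum_ite_eq' s u (fun _ => (1:ℝ)), Finset.sum_ite_eq' s v (fun _ => (-1:ℝ))]
  have hFval : ∑ x, f x ^ 2 = 2 := by
    have hsq : ∀ x : V, f x ^ 2 = f x * f x := fun x => sq (f x)
    rw [Finset.sum_congr rfl fun x _ => hsq x, key f]
    simp [hf, hne, hvu]
    norm_num
  refine ⟨f, by rw [hFval]; norm_num, ?_⟩
  rw [hFval, key (fun x => ∑ y, G.adjMatrix ℝ x y * f y)]
  rw [inner_adj G f u, inner_adj G f v, sumnb, sumnb]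
  have h1 : v ∈ G.neighborFinset u := by simpa using huv
  have h2 : u ∈ G.neighborFinset v := by simpa using huv.symm
  have h3 : u ∉ G.neighborFinset u := by simp
  have h4 : v ∉ G.neighborFinset v := by simp
  rw [if_pos h1, if_neg h3, if_pos h2, if_neg h4]
  norm_num

lemma lamMin_le_neg_one (G : SimpleGraph V) [DecidableRel G.Adj]
    (hE : ∃ u v, G.Adj u v) : lamMin (G.adjMatrix ℝ) ≤ -1 := by
  obtain ⟨u, v, huv⟩ := hE
  exact csInf_le ⟨-(G.maxDegree : ℝ), fun r hr => lamMin_mem_ge G r hr⟩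
    (lamMin_neg_one_mem G huv)

lemma neg_maxDegree_le_lamMin (G : SimpleGraph V) [DecidableRel G.Adj]
    (hE : ∃ u v, G.Adj u v) : -(G.maxDegree : ℝ) ≤ lamMin (G.adjMatrix ℝ) := by
  obtain ⟨u, v, huv⟩ := hE
  exact le_csInf ⟨-1, lamMin_neg_one_mem G huv⟩ (lamMin_mem_ge G)

lemma lamMin_le_rayleigh (G : SimpleGraph V) [DecidableRel G.Adj] (g : V → ℝ) :
    lamMin (G.adjMatrix ℝ) * ∑ x, g x ^ 2 ≤ ∑ x, g x * ∑ y, G.adjMatrix ℝ x y * g y := by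
  by_cases hF : (∑ x, g x ^ 2) = 0
  · have hz : ∀ x ∈ (univ : Finset V), g x ^ 2 = 0 := by
      rw [← Finset.sum_eq_zero_iff_of_nonneg (fun x _ => sq_nonneg (g x))]
      exact hF
    have hz' : ∀ x : V, g x = 0 := fun x => by
      have := hz x (mem_univ x); exact pow_eq_zero_iff (n := 2) (by norm_num) |>.mp this
    rw [hF, mul_zero]
    refine Finset.sum_nonneg' fun x => ?_
    rw [hz' x, zero_mul]
  · have hF0 : 0 < ∑ x, g x ^ 2 :=
      (Finset.sum_nonneg fun x _ => sq_nonneg (g x)).lt_of_ne (Ne.symm hF)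
    have hmem := csInf_le ⟨-(G.maxDegree : ℝ), fun r hr => lamMin_mem_ge G r hr⟩
      (Set.mem_setOf.mpr ⟨g, hF, rfl⟩)
    calc lamMin (G.adjMatrix ℝ) * ∑ x, g x ^ 2
        ≤ ((∑ x, g x * ∑ y, G.adjMatrix ℝ x y * g y) / (∑ x, g x ^ 2)) * ∑ x, g x ^ 2 :=
          mul_le_mul_of_nonneg_right hmem hF0.le
      _ = _ := div_mul_cancel₀ _ (ne_of_gt hF0)


/-- **Lemma (top links).** Let `G` be a finite simple graph with `n` vertices and
maximum degree `Δ`, having at least one edge, and let `k ≥ 2` be an integer with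
`k ≤ n / (Δ + |λ_min(A_G)|)`.  Then for every independent set `S` of `G` with
`|S| = k - 2`, the random walk matrix of the graph `H_S` satisfies `λ₂ ≤ 1/k`. -/
theorem hsLam2_le (G : SimpleGraph V) [DecidableRel G.Adj]
    (hE : ∃ u v, G.Adj u v) (k : ℕ) (hk : 2 ≤ k)
    (hkn : (k : ℝ) ≤ (Fintype.card V : ℝ) /
      ((G.maxDegree : ℝ) + |lamMin (G.adjMatrix ℝ)|))
    (S : Finset V) (hS : ∀ u ∈ S, ∀ v ∈ S, ¬ G.Adj u v) (hcard : S.card = k - 2) :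
    hsLam2 G S ≤ 1 / (k : ℝ) := by
  classical
  have hk2 : (2:ℝ) ≤ (k:ℝ) := by exact_mod_cast hk
  have hk0 : (0:ℝ) < (k:ℝ) := by linarith
  -- basic spectral quantities
  set Δ : ℝ := (G.maxDegree : ℝ) with hΔdef
  set lam : ℝ := -(lamMin (G.adjMatrix ℝ)) with hlamdef
  have hlam1 : (1:ℝ) ≤ lam := by
    have := lamMin_le_neg_one G hE; rw [hlamdef]; linarith
  have hΔ1 : (1:ℝ) ≤ Δ := by
    obtain ⟨u, v, huv⟩ := hE
    have h1 : 1 ≤ G.degree u := by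
      rw [← SimpleGraph.card_neighborFinset_eq_degree]
      exact Finset.card_pos.mpr ⟨v, by simpa using huv⟩
    have h2 := G.degree_le_maxDegree u
    rw [hΔdef]; exact_mod_cast le_trans h1 h2
  have hlamΔ : lam ≤ Δ := by
    have := neg_maxDegree_le_lamMin G hE; rw [hlamdef, hΔdef]; linarith
  have habs : |lamMin (G.adjMatrix ℝ)| = lam := by
    rw [abs_of_neg (by linarith : lamMin (G.adjMatrix ℝ) < 0)]
  -- size bounds
  set n : ℝ := (Fintype.card V : ℝ) with hndef
  have hn : (k:ℝ) * (Δ + lam) ≤ n := by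
    rw [habs] at hkn
    exact (le_div_iff₀ (by linarith : (0:ℝ) < Δ + lam)).mp hkn
  set W : Finset V := hsVerts G S with hWdef
  set m : ℝ := (W.card : ℝ) with hmdef
  have hcN : ((closedNbhd G S).card : ℝ) ≤ ((k:ℝ) - 2) * (Δ + 1) := by
    have hsub : Finset.univ.filter (fun v => ∃ u ∈ S, G.Adj u v)
        ⊆ S.biUnion (fun u => G.neighborFinset u) := by
      intro v hv
      simp only [Finset.mem_filter, Finset.mem_univ, true_and] at hv
      obtain ⟨u, hu, ha⟩ := hv
      exact Finset.mem_biUnion.mpr ⟨u, hu, by simpa using ha⟩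
    have h1 : (closedNbhd G S).card ≤ S.card + ∑ u ∈ S, (G.neighborFinset u).card := by
      calc (closedNbhd G S).card
          ≤ S.card + (Finset.univ.filter (fun v => ∃ u ∈ S, G.Adj u v)).card :=
            Finset.card_union_le _ _
        _ ≤ S.card + (S.biUnion (fun u => G.neighborFinset u)).card := by
            exact Nat.add_le_add_left (Finset.card_le_card hsub) _
        _ ≤ S.card + ∑ u ∈ S, (G.neighborFinset u).card :=
            Nat.add_le_add_left (Finset.card_biUnion_le) _
    have h2 : ∑ u ∈ S, (G.neighborFinset u).card ≤ S.card * G.maxDegree := by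
      calc ∑ u ∈ S, (G.neighborFinset u).card ≤ S.card • G.maxDegree :=
            Finset.sum_le_card_nsmul S _ G.maxDegree (fun u _ => by
              rw [SimpleGraph.card_neighborFinset_eq_degree]
              exact G.degree_le_maxDegree u)
        _ = S.card * G.maxDegree := by rw [smul_eq_mul]
    have h3 : (closedNbhd G S).card ≤ (k - 2) * (G.maxDegree + 1) := by
      calc (closedNbhd G S).card ≤ S.card + S.card * G.maxDegree := le_trans h1 (by omega)
        _ = S.card * (G.maxDegree + 1) := by ring
        _ = (k - 2) * (G.maxDegree + 1) := by rw [hcard]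
    calc ((closedNbhd G S).card : ℝ) ≤ (((k - 2) * (G.maxDegree + 1) : ℕ) : ℝ) := by
          exact_mod_cast h3
      _ = ((k:ℝ) - 2) * (Δ + 1) := by
          rw [hΔdef]; push_cast [Nat.cast_sub hk]; ring
  have hm_eq : m = n - ((closedNbhd G S).card : ℝ) := by
    have h1 : W.card = Fintype.card V - (closedNbhd G S).card := by
      rw [hWdef, hsVerts, Finset.card_sdiff_of_subset (Finset.subset_univ _), Finset.card_univ]
    have hle : (closedNbhd G S).card ≤ Fintype.card V := by
      rw [← Finset.card_univ]; exact Finset.card_le_card (Finset.subset_univ _)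
    rw [hmdef, h1, Nat.cast_sub hle, hndef]
  have hm2 : (k:ℝ) * (lam - 1) + 2*Δ + 2 ≤ m := by nlinarith [hn, hcN, hm_eq]
  have hmΔ : 2*Δ + 2 ≤ m := by nlinarith
  have hm1 : (0:ℝ) < m - 1 - Δ := by linarith
  -- now the variational bound
  have hbody : ∀ r ∈ { r : ℝ | ∃ f : V → ℝ,
      (∑ v ∈ hsVerts G S, ((hsNbrs G S v).card : ℝ) * f v) = 0 ∧
      (∑ v ∈ hsVerts G S, ((hsNbrs G S v).card : ℝ) * f v ^ 2) ≠ 0 ∧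
      r = (∑ v ∈ hsVerts G S, f v * ∑ u ∈ hsNbrs G S v, f u) /
          (∑ v ∈ hsVerts G S, ((hsNbrs G S v).card : ℝ) * f v ^ 2) },
      r ≤ 1 / (k:ℝ) := by
    rintro r ⟨f, horth, hdnz, rfl⟩
    set T : ℝ := ∑ v ∈ W, f v with hTdef
    set F : ℝ := ∑ v ∈ W, f v ^ 2 with hFdef
    set d : V → ℝ := fun v => ((W.filter (fun u => G.Adj v u)).card : ℝ) with hddef
    -- degree identities
    have e1 : ∀ v, hsNbrs G S v = (W.erase v).filter (fun u => ¬ G.Adj v u) := by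
      intro v
      ext u
      simp only [hsNbrs, hWdef, Finset.mem_filter, Finset.mem_erase]
      tauto
    have e2 : ∀ v, (W.erase v).filter (fun u => G.Adj v u)
        = W.filter (fun u => G.Adj v u) := by
      intro v
      ext u
      simp only [Finset.mem_filter, Finset.mem_erase]
      constructor
      · rintro ⟨⟨_, h⟩, ha⟩; exact ⟨h, ha⟩
      · rintro ⟨h, ha⟩; exact ⟨⟨(G.ne_of_adj ha).symm, h⟩, ha⟩
    have hcardsplit : ∀ v ∈ W, ((W.filter (fun u => G.Adj v u)).card : ℝ)
        + ((hsNbrs G S v).card : ℝ) = m - 1 := by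
      intro v hv
      have h1 : (W.filter (fun u => G.Adj v u)).card + (hsNbrs G S v).card
          = W.card - 1 := by
        rw [e1 v, ← e2 v, ← Finset.card_erase_of_mem hv]
        exact Finset.card_filter_add_card_filter_not (p := fun u => G.Adj v u)
      have hW1 : 1 ≤ W.card := Finset.card_pos.mpr ⟨v, hv⟩
      have := congrArg (fun x : ℕ => (x : ℝ)) h1
      push_cast [Nat.cast_sub hW1] at this
      rw [hmdef]; linarith
    have hDv : ∀ v ∈ W, ((hsNbrs G S v).card : ℝ) = m - 1 - d v := by
      intro v hv
      have := hcardsplit v hv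
      simp only [hddef]
      linarith
    have hd0 : ∀ v, 0 ≤ d v := fun v => by positivity
    have hdΔ : ∀ v, d v ≤ Δ := by
      intro v
      have hsub : W.filter (fun u => G.Adj v u) ⊆ G.neighborFinset v := by
        intro u hu
        simp only [Finset.mem_filter] at hu
        simpa using hu.2
      have h1 : (W.filter (fun u => G.Adj v u)).card ≤ G.maxDegree := by
        calc (W.filter (fun u => G.Adj v u)).card ≤ (G.neighborFinset v).card :=
              Finset.card_le_card hsub
          _ = G.degree v := SimpleGraph.card_neighborFinset_eq_degree G v
          _ ≤ G.maxDegree := G.degree_le_maxDegree v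
      simp only [hddef, hΔdef]
      exact_mod_cast h1
    -- orthogonality
    have horth' : ∑ v ∈ W, ((hsNbrs G S v).card : ℝ) * f v = 0 := horth
    have hP : ∑ v ∈ W, d v * f v = (m - 1) * T := by
      have h1 : ∑ v ∈ W, (m - 1 - d v) * f v = 0 := by
        rw [← horth']
        exact Finset.sum_congr rfl fun v hv => by rw [hDv v hv]
      have h2 : ∑ v ∈ W, (m - 1 - d v) * f v
          = (m - 1) * T - ∑ v ∈ W, d v * f v := by
        rw [hTdef, Finset.mul_sum, ← Finset.sum_sub_distrib]
        exact Finset.sum_congr rfl fun v _ => by ring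
      linarith [h1, h2]
    -- numerator identity
    set Q : ℝ := ∑ v ∈ W, f v * ∑ u ∈ W.filter (fun u => G.Adj v u), f u with hQdef
    have e3 : ∀ v ∈ W, ∑ u ∈ hsNbrs G S v, f u
        = (T - f v) - ∑ u ∈ W.filter (fun u => G.Adj v u), f u := by
      intro v hv
      have hsplit := Finset.sum_filter_add_sum_filter_not (W.erase v)
        (fun u => G.Adj v u) f
      rw [e2 v, ← e1 v] at hsplit
      have herase : ∑ u ∈ W.erase v, f u = T - f v := by
        rw [Finset.sum_erase_eq_sub hv, hTdef]
      linarith [hsplit, herase ▸ hsplit]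
    have hnum : (∑ v ∈ hsVerts G S, f v * ∑ u ∈ hsNbrs G S v, f u) = T^2 - F - Q := by
      show (∑ v ∈ W, f v * ∑ u ∈ hsNbrs G S v, f u) = T^2 - F - Q
      calc ∑ v ∈ W, f v * ∑ u ∈ hsNbrs G S v, f u
          = ∑ v ∈ W, (f v * T - f v ^ 2
              - f v * ∑ u ∈ W.filter (fun u => G.Adj v u), f u) :=
            Finset.sum_congr rfl fun v hv => by rw [e3 v hv]; ring
        _ = (∑ v ∈ W, f v * T) - (∑ v ∈ W, f v ^ 2)
              - ∑ v ∈ W, f v * ∑ u ∈ W.filter (fun u => G.Adj v u), f u := by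
            rw [Finset.sum_sub_distrib, Finset.sum_sub_distrib]
        _ = T^2 - F - Q := by
            rw [← Finset.sum_mul, ← hTdef, ← hFdef, ← hQdef]; ring
    -- the shifted test vector
    set α : ℝ := T / (m - 1 + lam) with hαdef
    have hM0 : (0:ℝ) < m - 1 + lam := by linarith
    have hα : α * (m - 1 + lam) = T := div_mul_cancel₀ _ (ne_of_gt hM0)
    set Ds : ℝ := ∑ v ∈ W, d v with hDsdef
    set g : V → ℝ := fun x => if x ∈ W then f x - α else 0 with hgdef
    have hgsq : ∑ x, g x ^ 2 = F - 2*α*T + α^2 * m := by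
      have h0 : ∑ x, g x ^ 2 = ∑ x ∈ W, (f x - α)^2 := by
        rw [← Finset.sum_subset (Finset.subset_univ W)
          (fun x _ hx => by simp [hgdef, hx])]
        exact Finset.sum_congr rfl fun x hx => by simp [hgdef, hx]
      rw [h0]
      calc ∑ x ∈ W, (f x - α)^2
          = ∑ x ∈ W, (f x ^ 2 - 2*α*f x + α^2) :=
            Finset.sum_congr rfl fun x _ => by ring
        _ = ((∑ x ∈ W, f x ^ 2) - ∑ x ∈ W, 2*α*f x) + ∑ x ∈ W, α^2 := by
            rw [Finset.sum_add_distrib, Finset.sum_sub_distrib]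
        _ = F - 2*α*T + α^2 * m := by
            rw [← Finset.mul_sum, Finset.sum_const, nsmul_eq_mul, ← hTdef, ← hFdef,
              ← hmdef]; ring
    have hgQ : ∑ x, g x * ∑ y, G.adjMatrix ℝ x y * g y
        = Q - 2*α*((m-1)*T) + α^2 * Ds := by
      have hin : ∀ x, ∑ y, G.adjMatrix ℝ x y * g y
          = ∑ u ∈ W.filter (fun u => G.Adj x u), (f u - α) := by
        intro x
        rw [inner_adj G g x]
        have hset : (G.neighborFinset x).filter (fun u => u ∈ W)
            = W.filter (fun u => G.Adj x u) := by
          ext u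
          simp only [Finset.mem_filter, SimpleGraph.mem_neighborFinset]
          tauto
        calc ∑ y ∈ G.neighborFinset x, g y
            = ∑ y ∈ G.neighborFinset x, (if y ∈ W then f y - α else 0) := rfl
          _ = ∑ y ∈ (G.neighborFinset x).filter (fun u => u ∈ W), (f y - α) :=
              (Finset.sum_filter _ _).symm
          _ = _ := by rw [hset]
      have hout : ∑ x, g x * ∑ y, G.adjMatrix ℝ x y * g y
          = ∑ v ∈ W, (f v - α) * ∑ u ∈ W.filter (fun u => G.Adj v u), (f u - α) := by
        rw [← Finset.sum_subset (Finset.subset_univ W)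
          (fun x _ hx => by simp [hgdef, hx])]
        exact Finset.sum_congr rfl fun v hv => by rw [hin v]; simp [hgdef, hv]
      have hsplit2 : ∀ v, ∑ u ∈ W.filter (fun u => G.Adj v u), (f u - α)
          = (∑ u ∈ W.filter (fun u => G.Adj v u), f u) - α * d v := by
        intro v
        rw [Finset.sum_sub_distrib, Finset.sum_const, nsmul_eq_mul]
        simp only [hddef]
        ring
      have hAv : ∑ v ∈ W, (∑ u ∈ W.filter (fun u => G.Adj v u), f u)
          = ∑ u ∈ W, d u * f u := by
        have h1 : ∀ v, ∑ u ∈ W.filter (fun u => G.Adj v u), f u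
            = ∑ u ∈ W, if G.Adj v u then f u else 0 := fun v => Finset.sum_filter _ _
        rw [Finset.sum_congr rfl fun v _ => h1 v, Finset.sum_comm]
        refine Finset.sum_congr rfl fun u _ => ?_
        rw [← Finset.sum_filter, Finset.sum_const, nsmul_eq_mul]
        have hflip : W.filter (fun v => G.Adj v u) = W.filter (fun v => G.Adj u v) := by
          ext w
          simp only [Finset.mem_filter]
          constructor
          · rintro ⟨h1, h2⟩; exact ⟨h1, h2.symm⟩
          · rintro ⟨h1, h2⟩; exact ⟨h1, h2.symm⟩
        rw [hflip]
        all_goals simp only [hddef]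
      rw [hout]
      calc ∑ v ∈ W, (f v - α) * ∑ u ∈ W.filter (fun u => G.Adj v u), (f u - α)
          = ∑ v ∈ W, ((f v * ∑ u ∈ W.filter (fun u => G.Adj v u), f u)
              - α * (d v * f v)
              - α * (∑ u ∈ W.filter (fun u => G.Adj v u), f u)
              + α^2 * d v) :=
            Finset.sum_congr rfl fun v _ => by rw [hsplit2 v]; ring
        _ = (∑ v ∈ W, f v * ∑ u ∈ W.filter (fun u => G.Adj v u), f u)
              - α * (∑ v ∈ W, d v * f v)
              - α * (∑ v ∈ W, ∑ u ∈ W.filter (fun u => G.Adj v u), f u)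
              + α^2 * (∑ v ∈ W, d v) := by
            rw [Finset.sum_add_distrib, Finset.sum_sub_distrib, Finset.sum_sub_distrib,
              ← Finset.mul_sum, ← Finset.mul_sum, ← Finset.mul_sum]
        _ = Q - 2*α*((m-1)*T) + α^2 * Ds := by
            rw [hAv, hP, ← hQdef, ← hDsdef]; ring
    have hray := lamMin_le_rayleigh G g
    rw [hgsq, hgQ] at hray
    have hμ : lamMin (G.adjMatrix ℝ) = -lam := by rw [hlamdef]; ring
    rw [hμ] at hray
    have hDsle : Ds ≤ m * Δ := by
      rw [hDsdef, hmdef]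
      calc ∑ v ∈ W, d v ≤ ∑ v ∈ W, Δ := Finset.sum_le_sum fun v _ => hdΔ v
        _ = (W.card : ℝ) * Δ := by rw [Finset.sum_const, nsmul_eq_mul]
    have hkey : T^2 - 2*α*T*(m - 1 + lam) + α^2*(lam*m + Ds) ≤ 0 := by
      have hT : T = α * (m - 1 + lam) := hα.symm
      have ha0 : (0:ℝ) ≤ m - 1 + lam := le_of_lt hM0
      have ha1 : m ≤ m - 1 + lam := by linarith
      have ha2 : lam + Δ ≤ m - 1 + lam := by linarith
      have hfact : lam*m + Ds ≤ (m - 1 + lam)^2 := by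
        have h1 : m*(lam+Δ) = lam*m + m*Δ := by ring
        have h2 : m*(lam+Δ) ≤ (m-1+lam)*(lam+Δ) :=
          mul_le_mul_of_nonneg_right ha1 (by linarith)
        have h3 : (m-1+lam)*(lam+Δ) ≤ (m-1+lam)*(m-1+lam) :=
          mul_le_mul_of_nonneg_left ha2 ha0
        have h4 : (m-1+lam)*(m-1+lam) = (m-1+lam)^2 := by ring
        linarith [hDsle]
      have e : T^2 - 2*α*T*(m - 1 + lam) + α^2*(lam*m + Ds)
          = α^2*(lam*m + Ds) - α^2*((m - 1 + lam)^2) := by rw [hT]; ring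
      rw [e]
      have := mul_le_mul_of_nonneg_left hfact (sq_nonneg α)
      linarith
    have hF0 : 0 ≤ F := Finset.sum_nonneg fun v _ => sq_nonneg _
    have hnum_le : (∑ v ∈ hsVerts G S, f v * ∑ u ∈ hsNbrs G S v, f u) ≤ (lam - 1) * F := by
      rw [hnum]; linarith [hray, hkey]
    -- denominator
    have hden_ge : (m - 1 - Δ) * F ≤ ∑ v ∈ hsVerts G S, ((hsNbrs G S v).card : ℝ) * f v ^ 2 := by
      have h0 : (∑ v ∈ hsVerts G S, ((hsNbrs G S v).card : ℝ) * f v ^ 2)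
          = ∑ v ∈ W, (m - 1 - d v) * f v ^ 2 :=
        Finset.sum_congr rfl fun v hv => by rw [hDv v hv]
      rw [h0]
      calc (m - 1 - Δ) * F = ∑ v ∈ W, (m - 1 - Δ) * f v ^ 2 := by
            rw [hFdef, Finset.mul_sum]
        _ ≤ ∑ v ∈ W, (m - 1 - d v) * f v ^ 2 :=
            Finset.sum_le_sum fun v hv =>
              mul_le_mul_of_nonneg_right (by linarith [hdΔ v]) (sq_nonneg _)
    have hden0 : 0 < ∑ v ∈ hsVerts G S, ((hsNbrs G S v).card : ℝ) * f v ^ 2 := by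
      refine (Finset.sum_nonneg fun v _ => mul_nonneg (Nat.cast_nonneg _) (sq_nonneg _)).lt_of_ne (Ne.symm hdnz)
    rw [div_le_div_iff₀ hden0 hk0]
    have h1 : (∑ v ∈ hsVerts G S, f v * ∑ u ∈ hsNbrs G S v, f u) * k ≤ ((lam-1)*F) * k :=
      mul_le_mul_of_nonneg_right hnum_le hk0.le
    have h2 : ((lam-1)*F) * k ≤ (m - 1 - Δ) * F := by nlinarith
    linarith
  exact Real.sSup_le hbody (by positivity)

end Helpers
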